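/- For any integers n and p with n ≥ 3 and ⌈(n+1)/2⌉ ≤ p ≤ ⌊6n/7⌋, there exists a tree T of order n with γ_{StR}(T) = p. -/

import Mathlib

namespace SimpleGraph

variable {V : Type*}

/-- The degree of a vertex (cardinality of its open neighborhood). -/
noncomputable def deg (G : SimpleGraph V) (v : V) : ℕ := (G.neighborSet v).ncard

/-- Maximum degree. -/
noncomputable def maxDeg [Fintype V] (G : SimpleGraph V) : ℕ :=
  Finset.univ.sup fun v => G.deg v

/-- A strong Roman dominating function: `f : V → {0,1,...,⌈Δ/2⌉+1}` such that every vertex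
with value 0 has a neighbor `w` with `f w ≥ 2` and `f w ≥ 1 + ⌈|N(w) ∩ B₀|/2⌉`. -/
def IsStRDF [Fintype V] (G : SimpleGraph V) (f : V → ℕ) : Prop :=
  (∀ v, f v ≤ (G.maxDeg + 1) / 2 + 1) ∧
  ∀ v, f v = 0 → ∃ w, G.Adj v w ∧ 2 ≤ f w ∧
    1 + ((G.neighborSet w ∩ {u | f u = 0}).ncard + 1) / 2 ≤ f w

/-- The strong Roman domination number. -/
noncomputable def gammaStR [Fintype V] (G : SimpleGraph V) : ℕ :=
  sInf {k | ∃ f, G.IsStRDF f ∧ ∑ v, f v = k}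

/-- A Roman dominating function. -/
def IsRDF (G : SimpleGraph V) (f : V → ℕ) : Prop :=
  (∀ v, f v ≤ 2) ∧ ∀ v, f v = 0 → ∃ w, G.Adj v w ∧ f w = 2

/-- The Roman domination number. -/
noncomputable def gammaR [Fintype V] (G : SimpleGraph V) : ℕ :=
  sInf {k | ∃ f, G.IsRDF f ∧ ∑ v, f v = k}

/-- A dominating set. -/
def IsDomSet (G : SimpleGraph V) (D : Set V) : Prop :=
  ∀ v ∉ D, ∃ w ∈ D, G.Adj v w

/-- The domination number. -/
noncomputable def gammaDom [Fintype V] (G : SimpleGraph V) : ℕ :=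
  sInf {k | ∃ D : Set V, G.IsDomSet D ∧ D.ncard = k}

end SimpleGraph

namespace StR
open SimpleGraph

/-! ### Trees from parent functions -/

lemma isTree_of_parent {V : Type} (G : SimpleGraph V) (par : V → V) (root : V) (rank : V → ℕ)
    (hadj : ∀ v w, G.Adj v w ↔ (v ≠ root ∧ w = par v) ∨ (w ≠ root ∧ v = par w))
    (hrank : ∀ v, v ≠ root → rank (par v) < rank v)
    (hroot : par root = root) :
    G.IsTree := by
  have hle : ∀ v, rank (par v) ≤ rank v := by
    intro v
    by_cases h : v = root
    · subst h; rw [hroot]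
    · exact (hrank v h).le
  have hiter : ∀ (k : ℕ) (v : V), rank (par^[k] v) ≤ rank v := by
    intro k
    induction k with
    | zero => simp
    | succ k ih =>
      intro v
      rw [Function.iterate_succ_apply]
      exact (ih (par v)).trans (hle v)
  have reach : ∀ (r : ℕ) (v : V), rank v ≤ r → G.Reachable v root := by
    intro r
    induction r with
    | zero =>
      intro v hv
      by_cases h : v = root
      · subst h; exact Reachable.refl _
      · exact absurd (hrank v h) (by omega)
    | succ r ih =>
      intro v hv
      by_cases h : v = root
      · subst h; exact Reachable.refl _
      · exact (((hadj v (par v)).2 (Or.inl ⟨h, rfl⟩)).reachable).trans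
          (ih (par v) (by have := hrank v h; omega))
  have hconn : G.Connected := by
    have hpre : G.Preconnected := fun u v =>
      (reach (rank u) u le_rfl).trans (reach (rank v) v le_rfl).symm
    haveI : Nonempty V := ⟨root⟩
    exact ⟨hpre⟩
  have key : ∀ v, v ≠ root → ¬ (G \ fromEdgeSet {s(v, par v)}).Reachable v (par v) := by
    rintro v hv ⟨p⟩
    have hvS : v ∈ {u | ∃ k, par^[k] u = v} := ⟨0, rfl⟩
    have hpS : par v ∉ {u | ∃ k, par^[k] u = v} := by
      rintro ⟨k, hk⟩
      have h1 : rank (par^[k] (par v)) ≤ rank (par v) := hiter k (par v)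
      rw [hk] at h1
      exact absurd (hrank v hv) (by omega)
    obtain ⟨d, _, hd1, hd2⟩ := p.exists_boundary_dart _ hvS hpS
    have hne : d.fst ≠ d.snd := d.adj.ne
    have hadj' := d.adj
    rw [sdiff_adj, fromEdgeSet_adj] at hadj'
    obtain ⟨hG, hnotE⟩ := hadj'
    rw [hadj] at hG
    rcases hG with ⟨hfst, h2⟩ | ⟨hsnd, h2⟩
    · obtain ⟨k, hk⟩ := hd1
      cases k with
      | zero =>
        simp only [Function.iterate_zero, id] at hk
        rw [hk] at h2
        exact hnotE ⟨by rw [Set.mem_singleton_iff, hk, h2], hne⟩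
      | succ k =>
        refine hd2 ⟨k, ?_⟩
        rw [h2, ← Function.iterate_succ_apply, hk]
    · obtain ⟨k, hk⟩ := hd1
      exact hd2 ⟨k + 1, by rw [Function.iterate_succ_apply, ← h2, hk]⟩
  refine ⟨hconn, (isAcyclic_iff_forall_adj_isBridge).2 ?_⟩
  intro x y hxy
  rw [isBridge_iff]
  rcases (hadj x y).1 hxy with ⟨hx, rfl⟩ | ⟨hy, rfl⟩
  · exact key x hx
  · rw [Sym2.eq_swap]
    intro h
    exact key y hy h.symm

/-! ### The construction -/

section Construction

variable (A B t : ℕ)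

abbrev VT := Unit ⊕ (Fin A ⊕ ((Fin B ⊕ Fin B) ⊕ (Fin t ⊕ ((Fin t × Fin 3) ⊕ (Fin t × Fin 3)))))

variable {A B t}

abbrev vs : VT A B t := Sum.inl ()
abbrev leaf (a : Fin A) : VT A B t := Sum.inr (Sum.inl a)
abbrev mid (b : Fin B) : VT A B t := Sum.inr (Sum.inr (Sum.inl (Sum.inl b)))
abbrev tip (b : Fin B) : VT A B t := Sum.inr (Sum.inr (Sum.inl (Sum.inr b)))
abbrev gc (g : Fin t) : VT A B t := Sum.inr (Sum.inr (Sum.inr (Sum.inl g)))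
abbrev gm (g : Fin t) (i : Fin 3) : VT A B t := Sum.inr (Sum.inr (Sum.inr (Sum.inr (Sum.inl (g, i)))))
abbrev gl (g : Fin t) (i : Fin 3) : VT A B t := Sum.inr (Sum.inr (Sum.inr (Sum.inr (Sum.inr (g, i)))))

def par : VT A B t → VT A B t
  | Sum.inl _ => vs
  | Sum.inr (Sum.inl _) => vs
  | Sum.inr (Sum.inr (Sum.inl (Sum.inl _))) => vs
  | Sum.inr (Sum.inr (Sum.inl (Sum.inr b))) => mid b
  | Sum.inr (Sum.inr (Sum.inr (Sum.inl _))) => vs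
  | Sum.inr (Sum.inr (Sum.inr (Sum.inr (Sum.inl (g, _))))) => gc g
  | Sum.inr (Sum.inr (Sum.inr (Sum.inr (Sum.inr (g, i))))) => gm g i

def rnk : VT A B t → ℕ
  | Sum.inl _ => 0
  | Sum.inr (Sum.inl _) => 1
  | Sum.inr (Sum.inr (Sum.inl (Sum.inl _))) => 1
  | Sum.inr (Sum.inr (Sum.inl (Sum.inr _))) => 2
  | Sum.inr (Sum.inr (Sum.inr (Sum.inl _))) => 1
  | Sum.inr (Sum.inr (Sum.inr (Sum.inr (Sum.inl _)))) => 2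
  | Sum.inr (Sum.inr (Sum.inr (Sum.inr (Sum.inr _)))) => 3

variable (A B t) in
def TG : SimpleGraph (VT A B t) :=
  SimpleGraph.fromRel (fun v w => v ≠ vs ∧ w = par v)

lemma par_eq_self {v : VT A B t} (h : par v = v) : v = vs := by
  rcases v with _ | (a | ((b | b) | (g | (⟨g, i⟩ | ⟨g, i⟩)))) <;>
    simp_all [par, vs, leaf, mid, tip, gc, gm, gl]

lemma tg_adj (v w : VT A B t) :
    (TG A B t).Adj v w ↔ (v ≠ vs ∧ w = par v) ∨ (w ≠ vs ∧ v = par w) := by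
  rw [TG, SimpleGraph.fromRel_adj]
  constructor
  · rintro ⟨-, h⟩; exact h
  · rintro (⟨h1, rfl⟩ | ⟨h1, rfl⟩)
    · exact ⟨fun h => h1 (par_eq_self h.symm), Or.inl ⟨h1, rfl⟩⟩
    · exact ⟨fun h => h1 (par_eq_self h), Or.inr ⟨h1, rfl⟩⟩

lemma tg_isTree : (TG A B t).IsTree := by
  refine isTree_of_parent _ par vs rnk tg_adj ?_ rfl
  intro v hv
  rcases v with _ | (a | ((b | b) | (g | (⟨g, i⟩ | ⟨g, i⟩)))) <;>
    simp_all [par, rnk, vs, leaf, mid, tip, gc, gm, gl]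

lemma card_VT : Fintype.card (VT A B t) = 1 + A + 2 * B + 7 * t := by
  simp [Fintype.card_sum, Fintype.card_prod]
  ring

/-! ### Neighborhoods -/

lemma nbr_vs : (TG A B t).neighborSet vs = Set.range leaf ∪ Set.range mid ∪ Set.range gc := by
  ext w
  rw [mem_neighborSet, tg_adj]
  rcases w with _ | (a | ((b | b) | (g | (⟨g, i⟩ | ⟨g, i⟩)))) <;>
    simp [par, vs, leaf, mid, tip, gc, gm, gl]

lemma nbr_leaf (a : Fin A) : (TG A B t).neighborSet (leaf a) = {vs} := by
  ext w
  rw [mem_neighborSet, tg_adj]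
  rcases w with _ | (a' | ((b | b) | (g | (⟨g, i⟩ | ⟨g, i⟩)))) <;>
    simp [par, vs, leaf, mid, tip, gc, gm, gl]

lemma nbr_mid (b : Fin B) : (TG A B t).neighborSet (mid b) = {vs, tip b} := by
  ext w
  rw [mem_neighborSet, tg_adj]
  rcases w with _ | (a | ((b' | b') | (g | (⟨g, i⟩ | ⟨g, i⟩)))) <;>
    simp [par, vs, leaf, mid, tip, gc, gm, gl, eq_comm]

lemma nbr_tip (b : Fin B) : (TG A B t).neighborSet (tip b) = {mid b} := by
  ext w
  rw [mem_neighborSet, tg_adj]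
  rcases w with _ | (a | ((b' | b') | (g | (⟨g, i⟩ | ⟨g, i⟩)))) <;>
    simp [par, vs, leaf, mid, tip, gc, gm, gl]

lemma nbr_gc (g : Fin t) : (TG A B t).neighborSet (gc g) = insert vs (Set.range (gm g)) := by
  ext w
  rw [mem_neighborSet, tg_adj]
  rcases w with _ | (a | ((b | b) | (g' | (⟨g', i⟩ | ⟨g', i⟩)))) <;>
    simp [par, vs, leaf, mid, tip, gc, gm, gl]

lemma nbr_gm (g : Fin t) (i : Fin 3) :
    (TG A B t).neighborSet (gm g i) = {gc g, gl g i} := by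
  ext w
  rw [mem_neighborSet, tg_adj]
  rcases w with _ | (a | ((b | b) | (g' | (⟨g', i'⟩ | ⟨g', i'⟩)))) <;>
    simp [par, vs, leaf, mid, tip, gc, gm, gl, Prod.ext_iff] <;>
    exact and_congr eq_comm eq_comm

lemma nbr_gl (g : Fin t) (i : Fin 3) : (TG A B t).neighborSet (gl g i) = {gm g i} := by
  ext w
  rw [mem_neighborSet, tg_adj]
  rcases w with _ | (a | ((b | b) | (g' | (⟨g', i'⟩ | ⟨g', i'⟩)))) <;>
    simp [par, vs, leaf, mid, tip, gc, gm, gl, Prod.ext_iff] <;>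
    exact and_congr eq_comm eq_comm

lemma leaf_inj : Function.Injective (leaf : Fin A → VT A B t) := by
  intro a b h; simpa [leaf] using h

lemma mid_inj : Function.Injective (mid : Fin B → VT A B t) := by
  intro a b h; simpa [mid] using h

lemma gm_inj (g : Fin t) : Function.Injective (gm g : Fin 3 → VT A B t) := by
  intro a b h; simpa [gm] using h

/-- A finset whose coercion is contained in a set bounds its ncard from below. -/
lemma finset_card_le_ncard {α : Type*} [Fintype α] (F : Finset α) (S : Set α)
    (h : (F : Set α) ⊆ S) : F.card ≤ S.ncard := by
  simpa [Set.ncard_coe_finset] using Set.ncard_le_ncard h S.toFinite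


/-! ### Sum decomposition -/

lemma sum_decomp (f : VT A B t → ℕ) :
    ∑ v, f v = f vs + (∑ a, f (leaf a)) + (∑ b, (f (mid b) + f (tip b)))
      + ∑ g, (f (gc g) + ∑ i : Fin 3, (f (gm g i) + f (gl g i))) := by
  simp only [Fintype.sum_sum_type, Fintype.sum_prod_type, Finset.sum_add_distrib,
    Finset.univ_unique, Finset.sum_singleton]
  show f vs + _ = _
  ring

/-! ### Defender lemmas -/

variable {f : VT A B t → ℕ}

lemma def_leaf (hf : (TG A B t).IsStRDF f) {a : Fin A} (h0 : f (leaf a) = 0) :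
    2 ≤ f vs ∧ 1 + (((TG A B t).neighborSet vs ∩ {u | f u = 0}).ncard + 1) / 2 ≤ f vs := by
  obtain ⟨w, hw, h2, h3⟩ := hf.2 _ h0
  have hmem : w ∈ (TG A B t).neighborSet (leaf a) := hw
  rw [nbr_leaf, Set.mem_singleton_iff] at hmem
  subst hmem
  exact ⟨h2, h3⟩

lemma def_tip (hf : (TG A B t).IsStRDF f) {b : Fin B} (h0 : f (tip b) = 0) :
    2 ≤ f (mid b) := by
  obtain ⟨w, hw, h2, h3⟩ := hf.2 _ h0
  have hmem : w ∈ (TG A B t).neighborSet (tip b) := hw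
  rw [nbr_tip, Set.mem_singleton_iff] at hmem
  subst hmem
  exact h2

lemma def_gl (hf : (TG A B t).IsStRDF f) {g : Fin t} {i : Fin 3} (h0 : f (gl g i) = 0) :
    2 ≤ f (gm g i) := by
  obtain ⟨w, hw, h2, h3⟩ := hf.2 _ h0
  have hmem : w ∈ (TG A B t).neighborSet (gl g i) := hw
  rw [nbr_gl, Set.mem_singleton_iff] at hmem
  subst hmem
  exact h2

lemma def_mid (hf : (TG A B t).IsStRDF f) {b : Fin B} (h0 : f (mid b) = 0)
    (h1 : f (tip b) ≤ 1) :
    2 ≤ f vs ∧ 1 + (((TG A B t).neighborSet vs ∩ {u | f u = 0}).ncard + 1) / 2 ≤ f vs := by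
  obtain ⟨w, hw, h2, h3⟩ := hf.2 _ h0
  have hmem : w ∈ (TG A B t).neighborSet (mid b) := hw
  rw [nbr_mid, Set.mem_insert_iff, Set.mem_singleton_iff] at hmem
  rcases hmem with rfl | rfl
  · exact ⟨h2, h3⟩
  · omega

lemma def_gm (hf : (TG A B t).IsStRDF f) {g : Fin t} {i : Fin 3} (h0 : f (gm g i) = 0)
    (h1 : f (gl g i) ≤ 1) :
    1 + (((TG A B t).neighborSet (gc g) ∩ {u | f u = 0}).ncard + 1) / 2 ≤ f (gc g) := by
  obtain ⟨w, hw, h2, h3⟩ := hf.2 _ h0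
  have hmem : w ∈ (TG A B t).neighborSet (gm g i) := hw
  rw [nbr_gm, Set.mem_insert_iff, Set.mem_singleton_iff] at hmem
  rcases hmem with rfl | rfl
  · exact h3
  · omega

/-! ### Lower bound -/

lemma gadget_bound (hf : (TG A B t).IsStRDF f) (g : Fin t) :
    6 ≤ f (gc g) + ∑ i : Fin 3, (f (gm g i) + f (gl g i)) := by
  classical
  set P : Fin 3 → Prop := fun i => f (gm g i) = 0 ∧ f (gl g i) ≤ 1 with hP
  set K := (Finset.univ.filter P).card with hK
  have hK3 : K ≤ 3 := le_trans (Finset.card_filter_le _ _) (by simp)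
  have hstep : ∀ i : Fin 3, (if P i then 1 else 2) ≤ f (gm g i) + f (gl g i) := by
    intro i
    by_cases hz : f (gl g i) = 0
    · have h2 := def_gl hf hz
      split_ifs with h
      · omega
      · omega
    · split_ifs with h
      · omega
      · have h' : f (gm g i) ≠ 0 ∨ ¬ (f (gl g i) ≤ 1) := by
          rw [hP] at h; tauto
        rcases h' with h' | h'
        · rcases Nat.lt_or_ge (f (gm g i)) 2 with hlt | hge
          · have : f (gm g i) = 1 := by omega
            have : f (gl g i) ≥ 1 := by omega
            omega
          · omega
        · omega
  have hsum : 6 - K ≤ ∑ i : Fin 3, (f (gm g i) + f (gl g i)) := by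
    have heq : ∑ i : Fin 3, (if P i then 1 else 2) = K * 1 + (3 - K) * 2 := by
      rw [Finset.sum_ite, Finset.sum_const, Finset.sum_const]
      have h3 := Finset.card_filter_add_card_filter_not (s := (Finset.univ : Finset (Fin 3))) (p := P)
      simp only [Finset.card_univ, Fintype.card_fin] at h3
      simp only [smul_eq_mul]
      have hcc : (Finset.filter (fun x => P x) Finset.univ).card
          = (Finset.filter P Finset.univ).card := rfl
      have hcc2 : (Finset.filter (fun x => ¬ P x) Finset.univ).card
          = (Finset.filter (fun x => ¬ P x) Finset.univ).card := rfl
      omega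
    calc 6 - K = ∑ i : Fin 3, (if P i then 1 else 2) := by rw [heq]; omega
    _ ≤ _ := Finset.sum_le_sum (fun i _ => hstep i)
  by_cases hK0 : K = 0
  · omega
  · obtain ⟨i, hi⟩ : (Finset.univ.filter P).Nonempty := Finset.card_pos.mp (by omega)
    rw [Finset.mem_filter] at hi
    have hgm := def_gm hf hi.2.1 hi.2.2
    have hsub : K ≤ (((TG A B t).neighborSet (gc g)) ∩ {u | f u = 0}).ncard := by
      have hss : (((Finset.univ.filter P).image (gm g) : Finset (VT A B t)) : Set (VT A B t)) ⊆
          ((TG A B t).neighborSet (gc g)) ∩ {u | f u = 0} := by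
        intro x hx
        simp only [Finset.coe_image, Set.mem_image, Finset.mem_coe, Finset.mem_filter] at hx
        obtain ⟨i', ⟨-, hi'⟩, rfl⟩ := hx
        refine ⟨?_, hi'.1⟩
        rw [nbr_gc]
        exact Set.mem_insert_iff.2 (Or.inr ⟨i', rfl⟩)
      have hc := finset_card_le_ncard _ _ hss
      rwa [Finset.card_image_of_injective _ (gm_inj g)] at hc
    omega

lemma star_bound (hf : (TG A B t).IsStRDF f) (hAB : 2 ≤ A + B) :
    1 + B + (A + B + 1) / 2 ≤ f vs + (∑ a, f (leaf a)) + ∑ b, (f (mid b) + f (tip b)) := by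
  classical
  set Pl : Fin A → Prop := fun a => f (leaf a) = 0 with hPl
  set Pm : Fin B → Prop := fun b => f (mid b) = 0 ∧ f (tip b) ≤ 1 with hPm
  set j := (Finset.univ.filter Pl).card with hj
  set k := (Finset.univ.filter Pm).card with hk
  have hjA : j ≤ A := le_trans (Finset.card_filter_le _ _) (by simp)
  have hkB : k ≤ B := le_trans (Finset.card_filter_le _ _) (by simp)
  have hsumA : A - j ≤ ∑ a, f (leaf a) := by
    have heq : ∑ a : Fin A, (if Pl a then 0 else 1) = j * 0 + (A - j) * 1 := by
      rw [Finset.sum_ite, Finset.sum_const, Finset.sum_const]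
      have h3 := Finset.card_filter_add_card_filter_not (s := (Finset.univ : Finset (Fin A))) (p := Pl)
      simp only [Finset.card_univ, Fintype.card_fin] at h3
      simp only [smul_eq_mul]
      have hcc : (Finset.filter (fun x => Pl x) Finset.univ).card
          = (Finset.filter Pl Finset.univ).card := rfl
      omega
    calc A - j = ∑ a : Fin A, (if Pl a then 0 else 1) := by rw [heq]; omega
    _ ≤ _ := Finset.sum_le_sum (fun a _ => by
        split_ifs with h
        · omega
        · rw [hPl] at h; omega)
  have hsumB : 2 * B - k ≤ ∑ b, (f (mid b) + f (tip b)) := by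
    have hstep : ∀ b : Fin B, (if Pm b then 1 else 2) ≤ f (mid b) + f (tip b) := by
      intro b
      by_cases hz : f (tip b) = 0
      · have h2 := def_tip hf hz
        split_ifs with h
        · omega
        · omega
      · split_ifs with h
        · omega
        · have h' : f (mid b) ≠ 0 ∨ ¬ (f (tip b) ≤ 1) := by
            rw [hPm] at h; tauto
          rcases h' with h' | h'
          · rcases Nat.lt_or_ge (f (mid b)) 2 with hlt | hge
            · have : f (tip b) ≥ 1 := by omega
              omega
            · omega
          · omega
    have heq : ∑ b : Fin B, (if Pm b then 1 else 2) = k * 1 + (B - k) * 2 := by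
      rw [Finset.sum_ite, Finset.sum_const, Finset.sum_const]
      have h3 := Finset.card_filter_add_card_filter_not (s := (Finset.univ : Finset (Fin B))) (p := Pm)
      simp only [Finset.card_univ, Fintype.card_fin] at h3
      simp only [smul_eq_mul]
      have hcc : (Finset.filter (fun x => Pm x) Finset.univ).card
          = (Finset.filter Pm Finset.univ).card := rfl
      omega
    calc 2 * B - k = ∑ b : Fin B, (if Pm b then 1 else 2) := by rw [heq]; omega
    _ ≤ _ := Finset.sum_le_sum (fun b _ => hstep b)
  by_cases hjk : j + k = 0
  · have : f vs + (A - j) + (2 * B - k) ≤ f vs + (∑ a, f (leaf a)) + ∑ b, (f (mid b) + f (tip b)) := by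
      omega
    omega
  · -- get the defender bound at vs
    have hvs : 1 + (((TG A B t).neighborSet vs ∩ {u | f u = 0}).ncard + 1) / 2 ≤ f vs := by
      by_cases hj0 : 0 < j
      · obtain ⟨a, ha⟩ : (Finset.univ.filter Pl).Nonempty := Finset.card_pos.mp (by omega)
        rw [Finset.mem_filter] at ha
        exact (def_leaf hf ha.2).2
      · obtain ⟨b, hb⟩ : (Finset.univ.filter Pm).Nonempty := Finset.card_pos.mp (by omega)
        rw [Finset.mem_filter] at hb
        exact (def_mid hf hb.2.1 hb.2.2).2
    have hsub : j + k ≤ (((TG A B t).neighborSet vs) ∩ {u | f u = 0}).ncard := by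
      have hss : ((((Finset.univ.filter Pl).image leaf ∪ (Finset.univ.filter Pm).image mid) :
          Finset (VT A B t)) : Set (VT A B t)) ⊆
          ((TG A B t).neighborSet vs) ∩ {u | f u = 0} := by
        intro x hx
        simp only [Finset.coe_union, Set.mem_union, Finset.coe_image, Set.mem_image,
          Finset.mem_coe, Finset.mem_filter] at hx
        rcases hx with ⟨a, ⟨-, ha⟩, rfl⟩ | ⟨b, ⟨-, hb⟩, rfl⟩
        · refine ⟨?_, ha⟩
          rw [nbr_vs]
          exact Or.inl (Or.inl ⟨a, rfl⟩)
        · refine ⟨?_, hb.1⟩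
          rw [nbr_vs]
          exact Or.inl (Or.inr ⟨b, rfl⟩)
      have hc := finset_card_le_ncard _ _ hss
      rw [Finset.card_union_of_disjoint, Finset.card_image_of_injective _ leaf_inj,
        Finset.card_image_of_injective _ mid_inj] at hc
      · exact hc
      · rw [Finset.disjoint_left]
        rintro x hx1 hx2
        simp only [Finset.mem_image] at hx1 hx2
        obtain ⟨a, -, rfl⟩ := hx1
        obtain ⟨b, -, hb⟩ := hx2
        simp [leaf, mid] at hb
    omega

lemma lower_bound (hf : (TG A B t).IsStRDF f) (hAB : 2 ≤ A + B) :
    1 + B + 6 * t + (A + B + 1) / 2 ≤ ∑ v, f v := by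
  rw [sum_decomp]
  have h1 := star_bound hf hAB
  have h2 : 6 * t ≤ ∑ g : Fin t, (f (gc g) + ∑ i : Fin 3, (f (gm g i) + f (gl g i))) := by
    calc 6 * t = ∑ _g : Fin t, 6 := by simp [mul_comm]
    _ ≤ _ := Finset.sum_le_sum (fun g _ => gadget_bound hf g)
  omega

/-! ### The upper bound function -/

variable (A B t) in
def f0 : VT A B t → ℕ
  | Sum.inl _ => 1 + (A + B + 1) / 2
  | Sum.inr (Sum.inl _) => 0
  | Sum.inr (Sum.inr (Sum.inl (Sum.inl _))) => 0
  | Sum.inr (Sum.inr (Sum.inl (Sum.inr _))) => 1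
  | Sum.inr (Sum.inr (Sum.inr (Sum.inl _))) => 3
  | Sum.inr (Sum.inr (Sum.inr (Sum.inr (Sum.inl _)))) => 0
  | Sum.inr (Sum.inr (Sum.inr (Sum.inr (Sum.inr _)))) => 1

lemma ncard_range_leaf : (Set.range (leaf : Fin A → VT A B t)).ncard = A := by
  rw [← Set.image_univ, Set.ncard_image_of_injective _ leaf_inj, Set.ncard_univ]
  simp

lemma ncard_range_mid : (Set.range (mid : Fin B → VT A B t)).ncard = B := by
  rw [← Set.image_univ, Set.ncard_image_of_injective _ mid_inj, Set.ncard_univ]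
  simp

lemma ncard_nbr_vs : ((TG A B t).neighborSet vs ∩ {u | f0 A B t u = 0}).ncard = A + B := by
  have hset : (TG A B t).neighborSet vs ∩ {u | f0 A B t u = 0} =
      Set.range leaf ∪ Set.range mid := by
    rw [nbr_vs]
    ext u
    rcases u with _ | (a | ((b | b) | (g | (⟨g, i⟩ | ⟨g, i⟩)))) <;>
      simp [f0, vs, leaf, mid, tip, gc, gm, gl]
  rw [hset, Set.ncard_union_eq ?_ (Set.toFinite _) (Set.toFinite _),
    ncard_range_leaf, ncard_range_mid]
  rw [Set.disjoint_left]
  rintro x ⟨a, rfl⟩ ⟨b, hb⟩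
  simp [leaf, mid] at hb

lemma ncard_nbr_gc (g : Fin t) :
    ((TG A B t).neighborSet (gc g) ∩ {u | f0 A B t u = 0}).ncard = 3 := by
  have hset : (TG A B t).neighborSet (gc g) ∩ {u | f0 A B t u = 0} =
      Set.range (gm g) := by
    rw [nbr_gc]
    ext u
    rcases u with _ | (a | ((b | b) | (g' | (⟨g', i⟩ | ⟨g', i⟩)))) <;>
      simp [f0, vs, leaf, mid, tip, gc, gm, gl, Prod.ext_iff]
  rw [hset, ← Set.image_univ, Set.ncard_image_of_injective _ (gm_inj g), Set.ncard_univ]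
  simp

lemma maxDeg_ge_AB : A + B ≤ (TG A B t).maxDeg := by
  classical
  have hsub : (((Finset.univ.image leaf ∪ Finset.univ.image mid) :
      Finset (VT A B t)) : Set (VT A B t)) ⊆ (TG A B t).neighborSet vs := by
    intro x hx
    simp only [Finset.coe_union, Set.mem_union, Finset.coe_image, Set.mem_image,
      Finset.mem_coe] at hx
    rw [nbr_vs]
    rcases hx with ⟨a, -, rfl⟩ | ⟨b, -, rfl⟩
    · exact Or.inl (Or.inl ⟨a, rfl⟩)
    · exact Or.inl (Or.inr ⟨b, rfl⟩)
  have hc := finset_card_le_ncard _ _ hsub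
  rw [Finset.card_union_of_disjoint, Finset.card_image_of_injective _ leaf_inj,
    Finset.card_image_of_injective _ mid_inj] at hc
  · simp only [Finset.card_univ, Fintype.card_fin] at hc
    exact le_trans hc (Finset.le_sup (f := fun v => (TG A B t).deg v) (Finset.mem_univ vs))
  · rw [Finset.disjoint_left]
    rintro x hx1 hx2
    simp only [Finset.mem_image] at hx1 hx2
    obtain ⟨a, -, rfl⟩ := hx1
    obtain ⟨b, -, hb⟩ := hx2
    simp [leaf, mid] at hb

lemma maxDeg_ge_3 (g : Fin t) : 3 ≤ (TG A B t).maxDeg := by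
  classical
  have hsub : ((Finset.univ.image (gm g) : Finset (VT A B t)) : Set (VT A B t)) ⊆
      (TG A B t).neighborSet (gc g) := by
    intro x hx
    simp only [Finset.coe_image, Set.mem_image, Finset.mem_coe] at hx
    obtain ⟨i, -, rfl⟩ := hx
    rw [nbr_gc]
    exact Set.mem_insert_iff.2 (Or.inr ⟨i, rfl⟩)
  have hc := finset_card_le_ncard _ _ hsub
  rw [Finset.card_image_of_injective _ (gm_inj g)] at hc
  simp only [Finset.card_univ, Fintype.card_fin] at hc
  exact le_trans hc (Finset.le_sup (f := fun v => (TG A B t).deg v) (Finset.mem_univ (gc g)))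

lemma f0_StRDF (hAB : 2 ≤ A + B) : (TG A B t).IsStRDF (f0 A B t) := by
  constructor
  · intro v
    have hΔ1 := maxDeg_ge_AB (A := A) (B := B) (t := t)
    rcases v with _ | (a | ((b | b) | (g | (⟨g, i⟩ | ⟨g, i⟩)))) <;>
      simp only [f0]
    · omega
    · omega
    · omega
    · omega
    · have hΔ2 := maxDeg_ge_3 (A := A) (B := B) g
      omega
    · omega
    · omega
  · intro v h0
    rcases v with _ | (a | ((b | b) | (g | (⟨g, i⟩ | ⟨g, i⟩))))
    · simp [f0] at h0
    · refine ⟨vs, ?_, ?_, ?_⟩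
      · exact (tg_adj _ _).2 (Or.inl ⟨by simp [vs, leaf], rfl⟩)
      · show 2 ≤ 1 + (A + B + 1) / 2
        omega
      · rw [ncard_nbr_vs]
        show 1 + (A + B + 1) / 2 ≤ 1 + (A + B + 1) / 2
        omega
    · refine ⟨vs, ?_, ?_, ?_⟩
      · exact (tg_adj _ _).2 (Or.inl ⟨by simp [vs, mid], rfl⟩)
      · show 2 ≤ 1 + (A + B + 1) / 2
        omega
      · rw [ncard_nbr_vs]
        show 1 + (A + B + 1) / 2 ≤ 1 + (A + B + 1) / 2
        omega
    · simp [f0] at h0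
    · simp [f0] at h0
    · refine ⟨gc g, ?_, ?_, ?_⟩
      · exact (tg_adj _ _).2 (Or.inl ⟨by simp [vs, gm], rfl⟩)
      · show 2 ≤ 3
        omega
      · rw [ncard_nbr_gc]
        show 1 + (3 + 1) / 2 ≤ 3
        omega
    · simp [f0] at h0

lemma sum_f0 : ∑ v, f0 A B t v = 1 + B + 6 * t + (A + B + 1) / 2 := by
  rw [sum_decomp]
  simp [f0, vs, leaf, mid, tip, gc, gm, gl, Finset.sum_const, mul_comm]
  ring

lemma gamma_eq (hAB : 2 ≤ A + B) :
    (TG A B t).gammaStR = 1 + B + 6 * t + (A + B + 1) / 2 := by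
  have hmem : (1 + B + 6 * t + (A + B + 1) / 2) ∈
      {k | ∃ f, (TG A B t).IsStRDF f ∧ ∑ v, f v = k} :=
    ⟨f0 A B t, f0_StRDF hAB, sum_f0⟩
  refine le_antisymm (Nat.sInf_le hmem) (le_csInf ⟨_, hmem⟩ ?_)
  rintro k ⟨f, hf, rfl⟩
  exact lower_bound hf hAB

end Construction

lemma exists_params (n p : ℕ) (hn : 3 ≤ n) (h1 : (n + 2) / 2 ≤ p) (h2 : p ≤ 6 * n / 7) :
    ∃ A B t : ℕ, 2 ≤ A + B ∧ 1 + A + 2*B + 7*t = n ∧ 1 + B + 6*t + (A+B+1)/2 = p := by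
  obtain ⟨D, hD⟩ : ∃ D, D = 2*p - n - 1 := ⟨_, rfl⟩
  obtain ⟨t0, ht0⟩ : ∃ t0, t0 = (2*D + 2 - (n-1))/3 := ⟨_, rfl⟩
  by_cases hc : 5 * t0 ≤ D ∧ 2 * t0 + D ≤ n - 3
  · exact ⟨n - 1 + 3*t0 - 2*D, D - 5*t0, t0, by omega, by omega, by omega⟩
  · obtain ⟨t1, ht1⟩ : ∃ t1, t1 = (2*D - (n-1))/3 := ⟨_, rfl⟩
    exact ⟨n + 1 + 3*t1 - 2*D, D - 5*t1 - 1, t1, by omega, by omega, by omega⟩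

end StR


/-- For any integers `n`, `p` with `n ≥ 3` and `⌈(n+1)/2⌉ ≤ p ≤ ⌊6n/7⌋`, there exists a
tree `T` of order `n` with `γ_{StR}(T) = p`. -/
theorem stmt19 (n p : ℕ) (hn : 3 ≤ n) (h1 : (n + 2) / 2 ≤ p) (h2 : p ≤ 6 * n / 7) :
    ∃ (V : Type) (_ : Fintype V) (G : SimpleGraph V),
      G.IsTree ∧ Fintype.card V = n ∧ G.gammaStR = p := by
  obtain ⟨A, B, t, hAB, hcard, hp⟩ := StR.exists_params n p hn h1 h2
  refine ⟨StR.VT A B t, inferInstance, StR.TG A B t, StR.tg_isTree, ?_, ?_⟩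
  · rw [StR.card_VT]; omega
  · rw [StR.gamma_eq hAB]; omega
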